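/- Let F be a rigid field of level s(F) ≠ 2, and let φ, ψ be quadratic forms over F such that φ ⊥ ψ is anisotropic. Then D_F(φ ⊥ ψ) = D_F(φ) ∪ D_F(ψ). -/

import Mathlib

namespace PN

variable (F : Type*) [Field F]

/-- The diagonal quadratic form with diagonal entries given by a list. -/
noncomputable def qf (l : List F) : QuadraticForm F (Fin l.length → F) :=
  QuadraticMap.weightedSumSquares F l.get

/-- Isometry of diagonal quadratic forms. -/
def Isom (l l' : List F) : Prop :=
  Nonempty (QuadraticMap.IsometryEquiv (qf F l) (qf F l'))

/-- Diagonalization of the sum of `k` hyperbolic planes. -/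
def hypList (k : ℕ) : List F :=
  List.replicate k (1 : F) ++ List.replicate k (-1 : F)

/-- A (diagonalized) form is hyperbolic if it is isometric to a sum of hyperbolic planes. -/
def IsHyp (l : List F) : Prop := ∃ k : ℕ, Isom F l (hypList F k)

def negList (l : List F) : List F := l.map (fun x => -x)

/-- Witt equivalence of diagonalized quadratic forms. -/
def WittEquiv (l l' : List F) : Prop := IsHyp F (l ++ negList F l')

/-- Nondegeneracy: all diagonal entries are nonzero. -/
def Nondeg (l : List F) : Prop := ∀ x ∈ l, x ≠ 0

/-- Diagonalization of the Pfister form `⟪a₁,…,aₙ⟫ = ⟨1,-a₁⟩⊗⋯⊗⟨1,-aₙ⟩`. -/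
def pfister : List F → List F
  | [] => [1]
  | a :: l => pfister l ++ (pfister l).map (fun x => -a * x)

/-- `l` is a diagonalization of an `n`-fold Pfister form. -/
def IsPfister (n : ℕ) (l : List F) : Prop :=
  ∃ a : Fin n → F, (∀ i, a i ≠ 0) ∧ l = pfister F (List.ofFn a)

/-- `l` is a diagonalization of a form similar to an `n`-fold Pfister form. -/
def IsGP (n : ℕ) (l : List F) : Prop :=
  ∃ c : F, c ≠ 0 ∧ ∃ p : List F, IsPfister F n p ∧ l = p.map (fun x => c * x)

/-- The Witt class of `l` lies in `IⁿF`, i.e. it is a sum of classes of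
forms similar to `n`-fold Pfister forms. -/
def InI (n : ℕ) (l : List F) : Prop :=
  ∃ L : List (List F), (∀ p ∈ L, IsGP F n p) ∧ WittEquiv F l L.flatten

/-- The (scaled) `n`-Pfister number of `l` (`⊤` if the Witt class of `l` is not in `IⁿF`). -/
noncomputable def GPnum (n : ℕ) (l : List F) : ℕ∞ :=
  sInf {k : ℕ∞ | ∃ L : List (List F), (L.length : ℕ∞) = k ∧
    (∀ p ∈ L, IsGP F n p) ∧ WittEquiv F l L.flatten}

/-- The unscaled `n`-Pfister number: least number of genuine `n`-fold Pfister
forms with signs `±1` whose Witt classes sum to that of `l`. -/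
noncomputable def Pnum (n : ℕ) (l : List F) : ℕ∞ :=
  sInf {k : ℕ∞ | ∃ L : List (List F), (L.length : ℕ∞) = k ∧
    (∀ p ∈ L, IsPfister F n p ∨ ∃ q : List F, IsPfister F n q ∧ p = negList F q) ∧
    WittEquiv F l L.flatten}

/-- `GP_n(F, d)`: the supremum of `n`-Pfister numbers of forms in `IⁿF` of dimension `≤ d`. -/
noncomputable def GPsup (n : ℕ) (d : ℕ) : ℕ∞ :=
  ⨆ l ∈ {l : List F | Nondeg F l ∧ InI F n l ∧ l.length ≤ d}, GPnum F n l

/-- `a` is a nonzero value represented by the form `l`. -/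
def Represents (l : List F) (a : F) : Prop := a ≠ 0 ∧ ∃ x, qf F l x = a

/-- The set of nonzero represented values. -/
def D (l : List F) : Set F := {a | Represents F l a}

def Anisotropic (l : List F) : Prop := (qf F l).Anisotropic

def SameSquareClass (a b : F) : Prop := ∃ c : F, c ≠ 0 ∧ a = b * c ^ 2

/-- A field is rigid if every anisotropic binary form represents at most two square classes. -/
def Rigid : Prop := ∀ x y : F, x ≠ 0 → y ≠ 0 → Anisotropic F [x, y] →
  ∃ u v : F, ∀ a : F, Represents F [x, y] a →
    SameSquareClass F a u ∨ SameSquareClass F a v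

/-- The level `s(F)`: the least `n` such that `-1` is a sum of `n` squares (`⊤` if none). -/
noncomputable def level : ℕ∞ :=
  sInf {m : ℕ∞ | ∃ n : ℕ, m = (n : ℕ∞) ∧ ∃ f : Fin n → F, (-1 : F) = ∑ i, f i ^ 2}

/-- `l` is (isometric to) a subform of `l'`. -/
def Subform (l l' : List F) : Prop := ∃ r : List F, Isom F l' (l ++ r)

end PN

set_option linter.unusedSectionVars false

namespace PNAux
variable {F : Type*} [Field F]

lemma qf_pair (b c : F) (v : Fin 2 → F) :
    PN.qf F [b, c] v = b * v 0 ^ 2 + c * v 1 ^ 2 := by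
  simp [PN.qf, QuadraticMap.weightedSumSquares_apply, Fin.sum_univ_two, smul_eq_mul]
  ring

lemma qf_split (φ ψ : List F) (z : Fin (φ ++ ψ).length → F) :
    PN.qf F (φ ++ ψ) z =
      PN.qf F φ (fun i => z (Fin.cast (List.length_append : (φ ++ ψ).length = φ.length + ψ.length).symm (Fin.castAdd ψ.length i))) +
      PN.qf F ψ (fun j => z (Fin.cast (List.length_append : (φ ++ ψ).length = φ.length + ψ.length).symm (Fin.natAdd φ.length j))) := by
  have h : (φ ++ ψ).length = φ.length + ψ.length := List.length_append
  simp only [PN.qf, QuadraticMap.weightedSumSquares_apply]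
  rw [← Equiv.sum_comp (finCongr h.symm)
    (fun i => (φ ++ ψ).get i • (z i * z i)), Fin.sum_univ_add]
  congr 1
  · apply Finset.sum_congr rfl
    intro i _
    simp [List.get_eq_getElem, List.getElem_append_left]
  · apply Finset.sum_congr rfl
    intro j _
    simp [List.get_eq_getElem, List.getElem_append_right]

lemma qf_split' (φ ψ : List F) (z : Fin (φ ++ ψ).length → F) :
    ∃ (x : Fin φ.length → F) (y : Fin ψ.length → F),
      PN.qf F (φ ++ ψ) z = PN.qf F φ x + PN.qf F ψ y :=
  ⟨_, _, qf_split φ ψ z⟩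

/-- combine two vectors into a vector on the appended index type -/
def combine (φ ψ : List F) (x : Fin φ.length → F) (y : Fin ψ.length → F) :
    Fin (φ ++ ψ).length → F :=
  fun i => Fin.append x y (Fin.cast (List.length_append : (φ ++ ψ).length = φ.length + ψ.length) i)

lemma combine_left (φ ψ : List F) (x : Fin φ.length → F) (y : Fin ψ.length → F)
    (i : Fin φ.length) :
    combine φ ψ x y (Fin.cast (List.length_append : (φ ++ ψ).length = φ.length + ψ.length).symm (Fin.castAdd ψ.length i)) = x i := by
  simp [combine, Fin.append_left]

lemma combine_right (φ ψ : List F) (x : Fin φ.length → F) (y : Fin ψ.length → F)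
    (j : Fin ψ.length) :
    combine φ ψ x y (Fin.cast (List.length_append : (φ ++ ψ).length = φ.length + ψ.length).symm (Fin.natAdd φ.length j)) = y j := by
  simp [combine, Fin.append_right]

lemma qf_combine (φ ψ : List F) (x : Fin φ.length → F) (y : Fin ψ.length → F) :
    PN.qf F (φ ++ ψ) (combine φ ψ x y) = PN.qf F φ x + PN.qf F ψ y := by
  rw [qf_split]
  congr 1 <;> congr 1 <;> funext i <;>
    first
      | exact combine_left φ ψ x y i
      | exact combine_right φ ψ x y i

lemma aniso_pair {φ ψ : List F} (han : PN.Anisotropic F (φ ++ ψ))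
    (x : Fin φ.length → F) (y : Fin ψ.length → F)
    (h : PN.qf F φ x + PN.qf F ψ y = 0) : x = 0 ∧ y = 0 := by
  have h0 : combine φ ψ x y = 0 := han _ (by rw [qf_combine]; exact h)
  constructor
  · funext i
    have := congrFun h0 (Fin.cast (List.length_append : (φ ++ ψ).length = φ.length + ψ.length).symm (Fin.castAdd ψ.length i))
    rw [combine_left] at this
    simpa using this
  · funext j
    have := congrFun h0 (Fin.cast (List.length_append : (φ ++ ψ).length = φ.length + ψ.length).symm (Fin.natAdd φ.length j))
    rw [combine_right] at this
    simpa using this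

lemma ssc_of {a b u : F} (h1 : PN.SameSquareClass F a u) (h2 : PN.SameSquareClass F b u) :
    PN.SameSquareClass F a b := by
  obtain ⟨c, hc, rfl⟩ := h1
  obtain ⟨d, hd, rfl⟩ := h2
  refine ⟨c / d, div_ne_zero hc hd, ?_⟩
  field_simp

end PNAux
theorem stmt_11 (F : Type*) [Field F] (hF : (2 : F) ≠ 0)
    (hrigid : PN.Rigid F) (hlevel : PN.level F ≠ 2)
    (φ ψ : List F) (hφ : PN.Nondeg F φ) (hψ : PN.Nondeg F ψ)
    (han : PN.Anisotropic F (φ ++ ψ)) :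
    PN.D F (φ ++ ψ) = PN.D F φ ∪ PN.D F ψ := by
  ext a
  constructor
  · rintro ⟨ha, z, hz⟩
    obtain ⟨x, y, hxy⟩ := PNAux.qf_split' φ ψ z
    rw [hz] at hxy
    obtain ⟨b, hbdef⟩ : ∃ b, PN.qf F φ x = b := ⟨_, rfl⟩
    obtain ⟨c, hcdef⟩ : ∃ c, PN.qf F ψ y = c := ⟨_, rfl⟩
    rw [hbdef, hcdef] at hxy
    by_cases hb : b = 0
    · right
      refine ⟨ha, y, ?_⟩
      rw [hb] at hxy
      rw [hcdef]
      linear_combination -hxy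
    by_cases hc : c = 0
    · left
      refine ⟨ha, x, ?_⟩
      rw [hc] at hxy
      rw [hbdef]
      linear_combination -hxy
    have hx0 : x ≠ 0 := fun h => hb (by rw [← hbdef, h, QuadraticMap.map_zero])
    have hy0 : y ≠ 0 := fun h => hc (by rw [← hcdef, h, QuadraticMap.map_zero])
    have haniso : PN.Anisotropic F [b, c] := by
      have key : ∀ v : Fin 2 → F, PN.qf F [b, c] v = 0 → v = 0 := by
        intro v hv
        rw [PNAux.qf_pair] at hv
        have h1 : PN.qf F φ (v 0 • x) + PN.qf F ψ (v 1 • y) = 0 := by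
          rw [QuadraticMap.map_smul, QuadraticMap.map_smul, smul_eq_mul, smul_eq_mul,
            hbdef, hcdef]
          linear_combination hv
        obtain ⟨hx, hy⟩ := PNAux.aniso_pair han _ _ h1
        have hv0 : v 0 = 0 := by
          rcases smul_eq_zero.mp hx with h | h
          · exact h
          · exact absurd h hx0
        have hv1 : v 1 = 0 := by
          rcases smul_eq_zero.mp hy with h | h
          · exact h
          · exact absurd h hy0
        exact funext (Fin.forall_fin_two.mpr ⟨hv0, hv1⟩)
      exact key
    obtain ⟨u, w, hr⟩ := hrigid b c hb hc haniso
    have Ra : PN.Represents F [b, c] a := by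
      refine ⟨ha, ![1, 1], ?_⟩
      rw [PNAux.qf_pair]
      simp only [Matrix.cons_val_zero, Matrix.cons_val_one, Matrix.head_cons]
      linear_combination -hxy
    have Rb : PN.Represents F [b, c] b := by
      refine ⟨hb, ![1, 0], ?_⟩
      rw [PNAux.qf_pair]
      simp
    have Rc : PN.Represents F [b, c] c := by
      refine ⟨hc, ![0, 1], ?_⟩
      rw [PNAux.qf_pair]
      simp
    have key : PN.SameSquareClass F a b ∨ PN.SameSquareClass F a c ∨
        PN.SameSquareClass F c b := by
      rcases hr a Ra with hA | hA <;> rcases hr b Rb with hB | hB <;>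
        rcases hr c Rc with hC | hC <;>
        first
          | exact Or.inl (PNAux.ssc_of hA hB)
          | exact Or.inr (Or.inl (PNAux.ssc_of hA hC))
          | exact Or.inr (Or.inr (PNAux.ssc_of hC hB))
    rcases key with ⟨k, hk, hab⟩ | ⟨k, hk, hac⟩ | ⟨e, he, hcb⟩
    · left
      refine ⟨ha, k • x, ?_⟩
      rw [QuadraticMap.map_smul, smul_eq_mul, hbdef]
      linear_combination -hab
    · right
      refine ⟨ha, k • y, ?_⟩
      rw [QuadraticMap.map_smul, smul_eq_mul, hcdef]
      linear_combination -hac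
    · -- c = b * e^2
      have hns : ∀ i : F, i ^ 2 ≠ -1 := by
        intro i hi
        have h0 : PN.qf F [b, c] ![e * i, 1] = 0 := by
          rw [PNAux.qf_pair]
          simp only [Matrix.cons_val_zero, Matrix.cons_val_one, Matrix.head_cons]
          linear_combination (b * e ^ 2) * hi + hcb
        have h1 := congrFun (haniso _ h0) (1 : Fin 2)
        simp at h1
      have hn2 : ∀ p q : F, p ^ 2 + q ^ 2 ≠ -1 := by
        intro p q hpq
        apply hlevel
        apply le_antisymm
        · apply sInf_le
          refine ⟨2, by norm_num, ![p, q], ?_⟩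
          rw [Fin.sum_univ_two]
          simp only [Matrix.cons_val_zero, Matrix.cons_val_one, Matrix.head_cons]
          linear_combination -hpq
        · apply le_sInf
          rintro m ⟨n, rfl, f, hf⟩
          rcases n with _ | _ | n
          · simp at hf
          · rw [Fin.sum_univ_one] at hf
            exact absurd hf.symm (hns (f 0))
          · norm_cast
            omega
      have hsq : ∃ w : F, 1 + e ^ 2 = w ^ 2 := by
        by_contra hcon
        push_neg at hcon
        have ht0 : (1 : F) + e ^ 2 ≠ 0 := by
          intro h
          exact hns e (by linear_combination h)
        have hant : PN.Anisotropic F [1, -(1 + e ^ 2)] := by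
          have key : ∀ v : Fin 2 → F, PN.qf F [1, -(1 + e ^ 2)] v = 0 → v = 0 := by
            intro v hv
            rw [PNAux.qf_pair] at hv
            by_cases hv1 : v 1 = 0
            · have hv0 : v 0 = 0 := by
                have h00 : v 0 ^ 2 = 0 := by rw [hv1] at hv; linear_combination hv
                exact pow_eq_zero_iff (two_ne_zero) |>.mp h00
              exact funext (Fin.forall_fin_two.mpr ⟨hv0, hv1⟩)
            · exact absurd (show (1 : F) + e ^ 2 = (v 0 / v 1) ^ 2 by
                field_simp
                linear_combination -hv) (hcon _)
          exact key
        obtain ⟨u', w', hr'⟩ := hrigid 1 (-(1 + e ^ 2)) one_ne_zero (neg_ne_zero.mpr ht0) hant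
        have R1 : PN.Represents F [1, -(1 + e ^ 2)] 1 := by
          refine ⟨one_ne_zero, ![1, 0], ?_⟩
          rw [PNAux.qf_pair]; simp
        have R2 : PN.Represents F [1, -(1 + e ^ 2)] (-(1 + e ^ 2)) := by
          refine ⟨neg_ne_zero.mpr ht0, ![0, 1], ?_⟩
          rw [PNAux.qf_pair]; simp
        have R3 : PN.Represents F [1, -(1 + e ^ 2)] (-e ^ 2) := by
          refine ⟨?_, ![1, 1], ?_⟩
          · simpa using pow_ne_zero 2 he
          · rw [PNAux.qf_pair]
            simp only [Matrix.cons_val_zero, Matrix.cons_val_one, Matrix.head_cons]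
            ring
        have key2 : PN.SameSquareClass F 1 (-(1 + e ^ 2)) ∨
            PN.SameSquareClass F 1 (-e ^ 2) ∨
            PN.SameSquareClass F (-e ^ 2) (-(1 + e ^ 2)) := by
          rcases hr' 1 R1 with h1 | h1 <;> rcases hr' _ R2 with h2 | h2 <;>
            rcases hr' _ R3 with h3 | h3 <;>
            first
              | exact Or.inl (PNAux.ssc_of h1 h2)
              | exact Or.inr (Or.inl (PNAux.ssc_of h1 h3))
              | exact Or.inr (Or.inr (PNAux.ssc_of h3 h2))
        rcases key2 with ⟨d, hd, h⟩ | ⟨d, hd, h⟩ | ⟨d, hd, h⟩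
        · exact hn2 d (e * d) (by linear_combination h)
        · exact hns (e * d) (by linear_combination h)
        · exact hcon (e / d) (by field_simp; linear_combination h)
      obtain ⟨w, hw⟩ := hsq
      left
      refine ⟨ha, w • x, ?_⟩
      rw [QuadraticMap.map_smul, smul_eq_mul, hbdef]
      linear_combination -hxy - hcb - b * hw
  · rintro (⟨ha, x, hx⟩ | ⟨ha, y, hy⟩)
    · exact ⟨ha, PNAux.combine φ ψ x 0, by
        rw [PNAux.qf_combine]; simp [hx, QuadraticMap.map_zero]⟩
    · exact ⟨ha, PNAux.combine φ ψ 0 y, by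
        rw [PNAux.qf_combine]; simp [hy, QuadraticMap.map_zero]⟩
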